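/- Let γ := 1.0321, p := γ^{40}, q := γ^{31}, δ₁ := (q−1)/((p−1)(q−2) + 2(p−1)(q−1)/q^{39}), δ₂ := (p−2)(q−1)/((p−1) − 2(p−1)(q−1)/q^{39}). Then for all integers i, j with 1 ≤ i ≤ 27 and 1 ≤ j ≤ 37: |p^i/q^j − 1| > max{ (p−2)(q−1)/((p−1)δ₁) + 2(q−1)p^i/q^{39} − 1 , 1 + 2(q−1)p^i/((q−2)q^{39}) − (q−1)/((p−1)(q−2)δ₂) }. -/

import Mathlib

lemma bridge (γ : ℝ) (hγ : 1 < γ) (M m : ℕ) (hm1 : 1 ≤ m) (hm30 : m ≤ 30)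
    (hM : M % 31 = m) (j : ℕ) (C : ℝ)
    (h1 : C < γ ^ m - 1) (h2 : C < 1 - 1 / γ ^ (31 - m)) :
    C < |γ ^ M / γ ^ (31 * j) - 1| := by
  have hγ0 : (0:ℝ) < γ := lt_trans one_pos hγ
  rcases le_or_gt (31 * j) M with h | h
  · have hMj : m ≤ M - 31 * j := by omega
    have heq : γ ^ M / γ ^ (31 * j) = γ ^ (M - 31 * j) := by
      rw [eq_comm, eq_div_iff (by positivity), ← pow_add]
      congr 1; omega
    rw [heq]
    have hge : γ ^ m ≤ γ ^ (M - 31 * j) := pow_le_pow_right₀ (le_of_lt hγ) hMj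
    have h1' : (1:ℝ) ≤ γ ^ (M - 31 * j) := one_le_pow₀ (le_of_lt hγ)
    rw [abs_of_nonneg (by linarith)]
    linarith
  · have hd : 31 - m ≤ 31 * j - M := by omega
    have heq : γ ^ M / γ ^ (31 * j) = 1 / γ ^ (31 * j - M) := by
      rw [div_eq_div_iff (by positivity) (by positivity), one_mul, ← pow_add]
      congr 1; omega
    rw [heq]
    have hge : γ ^ (31 - m) ≤ γ ^ (31 * j - M) := pow_le_pow_right₀ (le_of_lt hγ) hd
    have hp1 : (0:ℝ) < γ ^ (31 - m) := by positivity
    have hle : 1 / γ ^ (31 * j - M) ≤ 1 / γ ^ (31 - m) :=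
      one_div_le_one_div_of_le hp1 hge
    have h1' : (1:ℝ) ≤ γ ^ (31 * j - M) := one_le_pow₀ (le_of_lt hγ)
    have hx : 1 / γ ^ (31 * j - M) ≤ 1 := by
      rw [div_le_one (by positivity)]; exact h1'
    rw [abs_of_nonpos (by linarith)]
    linarith

/-- Relation (3) of the paper. With `γ = 1.0321`, `p = γ^40`, `q = γ^31`,
`δ₁ = (q-1)/((p-1)(q-2) + 2(p-1)(q-1)/q^39)` and
`δ₂ = (p-2)(q-1)/((p-1) - 2(p-1)(q-1)/q^39)`: for all integers `i, j` with
`1 ≤ i ≤ 27` and `1 ≤ j ≤ 37`,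
`|p^i/q^j - 1| > max{(p-2)(q-1)/((p-1)δ₁) + 2(q-1)p^i/q^39 - 1,
 1 + 2(q-1)p^i/((q-2)q^39) - (q-1)/((p-1)(q-2)δ₂)}`. -/
theorem relation_three :
    let γ : ℝ := 1.0321
    let p : ℝ := γ ^ 40
    let q : ℝ := γ ^ 31
    let δ₁ : ℝ := (q - 1) / ((p - 1) * (q - 2) + 2 * (p - 1) * (q - 1) / q ^ 39)
    let δ₂ : ℝ := (p - 2) * (q - 1) / ((p - 1) - 2 * (p - 1) * (q - 1) / q ^ 39)
    ∀ i j : ℕ, 1 ≤ i → i ≤ 27 → 1 ≤ j → j ≤ 37 →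
      max ((p - 2) * (q - 1) / ((p - 1) * δ₁) + 2 * (q - 1) * p ^ i / q ^ 39 - 1)
          (1 + 2 * (q - 1) * p ^ i / ((q - 2) * q ^ 39)
            - (q - 1) / ((p - 1) * (q - 2) * δ₂))
        < |p ^ i / q ^ j - 1| := by
  intro γ p q δ₁ δ₂ i j hi1 hi2 hj1 hj2
  have hγ : γ = 1.0321 := rfl
  have hp : p = γ ^ 40 := rfl
  have hq : q = γ ^ 31 := rfl
  have hδ₁ : δ₁ = (q - 1) / ((p - 1) * (q - 2) + 2 * (p - 1) * (q - 1) / q ^ 39) := rfl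
  have hδ₂ : δ₂ = (p - 2) * (q - 1) / ((p - 1) - 2 * (p - 1) * (q - 1) / q ^ 39) := rfl
  simp only [hδ₁, hδ₂, hp, hq, hγ]
  have hγ1 : (1:ℝ) < 1.0321 := by norm_num
  interval_cases i <;>
  · simp only [← pow_mul]
    refine bridge _ hγ1 _ _ (by norm_num) (by norm_num) rfl j _ ?_ ?_ <;>
      rw [max_lt_iff] <;> constructor <;> simp only [pow_mul] <;> norm_num
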